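/- Let f_1,…,f_k : {0,1}^n → ℝ≥0 and let g : {0,1}^{kn} → ℝ≥0 (viewed as a function of k vectors x^1,…,x^k ∈ {0,1}^n) be log-supermodular. If g(x^1,…,x^k) ≤ ∏_{i=1}^k f_i(z^i(x^1,…,x^k)) for all x^1,…,x^k ∈ {0,1}^n, then ∑_{x^1,…,x^k ∈ {0,1}^n} g(x^1,…,x^k) ≤ ∏_{i=1}^k ( ∑_{x ∈ {0,1}^n} f_i(x) ). -/

import Mathlib

open scoped NNReal

/-- `zvec x i` is the vector whose `j`-th component is the `(i+1)`-st largest (1-indexed)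
among `x 0 j, …, x (k-1) j`; i.e. it is `true` iff at least `i+1` of these values are `true`. -/
def zvec {k n : ℕ} (x : Fin k → Fin n → Bool) (i : Fin k) : Fin n → Bool :=
  fun j => decide ((i : ℕ) + 1 ≤ (Finset.univ.filter (fun a : Fin k => x a j = true)).card)

open Finset

namespace LogSupAux

variable {k : ℕ}

/-- number of `true` coordinates -/
def cnt {k : ℕ} (v : Fin k → Bool) : ℕ := (Finset.univ.filter (fun a : Fin k => v a = true)).card

/-- list count of `true` at coordinate `j` -/
def lcnt (j : Fin k) (l : List (Fin k → Bool)) : ℕ := l.countP (fun v => v j)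

def absorbL (u : Fin k → Bool) : List (Fin k → Bool) → List (Fin k → Bool)
  | [] => []
  | x :: t => (u ⊓ x) :: absorbL (u ⊔ x) t

def joinL (u : Fin k → Bool) : List (Fin k → Bool) → (Fin k → Bool)
  | [] => u
  | x :: t => joinL (u ⊔ x) t

lemma length_absorbL (u : Fin k → Bool) (l : List (Fin k → Bool)) :
    (absorbL u l).length = l.length := by
  induction l generalizing u with
  | nil => rfl
  | cons x t ih => simp [absorbL, ih]

lemma inf_apply (u x : Fin k → Bool) (j : Fin k) : (u ⊓ x) j = (u j && x j) := rfl
lemma sup_apply (u x : Fin k → Bool) (j : Fin k) : (u ⊔ x) j = (u j || x j) := rfl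

lemma lcnt_cons (j : Fin k) (u : Fin k → Bool) (l : List (Fin k → Bool)) :
    lcnt j (u :: l) = lcnt j l + (if u j then 1 else 0) := by
  simp [lcnt, List.countP_cons]

lemma lcnt_absorbL (j : Fin k) (l : List (Fin k → Bool)) (u : Fin k → Bool) :
    lcnt j (joinL u l :: absorbL u l) = lcnt j (u :: l) := by
  induction l generalizing u with
  | nil => simp [absorbL, joinL]
  | cons x t ih =>
      have h := ih (u ⊔ x)
      simp only [absorbL, joinL, lcnt_cons] at *
      have hb : (if (u ⊔ x) j then (1:ℕ) else 0) + (if (u ⊓ x) j then 1 else 0)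
          = (if u j then 1 else 0) + (if x j then 1 else 0) := by
        rw [inf_apply, sup_apply]; cases hu : u j <;> cases hx : x j <;> simp
      omega
variable {g : (Fin k → Bool) → ℝ≥0}

lemma absorb_prod (hg : ∀ x y, g x * g y ≤ g (x ⊓ y) * g (x ⊔ y))
    (l : List (Fin k → Bool)) (u : Fin k → Bool) :
    g u * (l.map g).prod ≤ g (joinL u l) * ((absorbL u l).map g).prod := by
  induction l generalizing u with
  | nil => simp [absorbL, joinL]
  | cons x t ih =>
      simp only [absorbL, joinL, List.map_cons, List.prod_cons]
      calc g u * (g x * (t.map g).prod) = (g u * g x) * (t.map g).prod := by ring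
        _ ≤ (g (u ⊓ x) * g (u ⊔ x)) * (t.map g).prod := by
              exact mul_le_mul_left (hg u x) _
        _ = g (u ⊓ x) * (g (u ⊔ x) * (t.map g).prod) := by ring
        _ ≤ g (u ⊓ x) * (g (joinL (u ⊔ x) t) * ((absorbL (u ⊔ x) t).map g).prod) := by
              exact mul_le_mul_right (ih (u ⊔ x)) _
        _ = g (joinL (u ⊔ x) t) * (g (u ⊓ x) * ((absorbL (u ⊔ x) t).map g).prod) := by ring

/-- i-th order statistic (0-indexed) of a list of cube points -/
def Zl (l : List (Fin k → Bool)) (i : ℕ) : Fin k → Bool := fun j => decide (i + 1 ≤ lcnt j l)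

lemma joinL_apply (l : List (Fin k → Bool)) (u : Fin k → Bool) (j : Fin k) :
    (joinL u l) j = (u j || l.any (fun v => v j)) := by
  induction l generalizing u with
  | nil => simp [joinL]
  | cons x t ih =>
      simp only [joinL, List.any_cons, ih (u ⊔ x), sup_apply]
      cases u j <;> cases x j <;> simp

lemma lcnt_pos_iff (l : List (Fin k → Bool)) (u : Fin k → Bool) (j : Fin k) :
    1 ≤ lcnt j (u :: l) ↔ (u j || l.any (fun v => v j)) = true := by
  rw [lcnt_cons]
  cases hu : u j
  · simp only [hu, Bool.false_or, Bool.false_eq_true, if_false, Nat.add_zero]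
    constructor
    · intro h1
      rw [List.any_eq_true]
      exact List.countP_pos_iff.mp h1
    · intro h1
      exact List.countP_pos_iff.mpr (List.any_eq_true.mp h1)
  · simp [hu]

lemma joinL_eq_Zl (l : List (Fin k → Bool)) (u : Fin k → Bool) :
    joinL u l = Zl (u :: l) 0 := by
  funext j
  rw [joinL_apply]
  simp only [Zl, Nat.zero_add]
  by_cases h : 1 ≤ lcnt j (u :: l)
  · rw [decide_eq_true h, ((lcnt_pos_iff l u j).mp h).symm]
  · have hf : (u j || l.any (fun v => v j)) = false := by
      rw [Bool.eq_false_iff]; intro hc; exact h ((lcnt_pos_iff l u j).mpr hc)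
    rw [decide_eq_false h, hf]

lemma Zl_absorbL (l : List (Fin k → Bool)) (u : Fin k → Bool) (i : ℕ) :
    Zl (absorbL u l) i = Zl (u :: l) (i + 1) := by
  funext j
  have hc := lcnt_absorbL j l u
  rw [lcnt_cons j (joinL u l) (absorbL u l)] at hc
  simp only [Zl]
  rcases h : joinL u l j with _ | _
  · have h0 : ¬ (1 ≤ lcnt j (u :: l)) := fun hh => by
      have h2 := (lcnt_pos_iff l u j).mp hh
      rw [← joinL_apply, h] at h2
      exact Bool.false_ne_true h2
    rw [h] at hc
    have h2 : lcnt j (absorbL u l) = lcnt j (u :: l) := by simpa using hc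
    rw [decide_eq_false (by omega : ¬ (i + 1 ≤ lcnt j (absorbL u l))),
      decide_eq_false (by omega : ¬ (i + 1 + 1 ≤ lcnt j (u :: l)))]
  · rw [h] at hc
    have h3 : lcnt j (absorbL u l) + 1 = lcnt j (u :: l) := by simpa using hc
    have hiff : (i + 1 ≤ lcnt j (absorbL u l)) ↔ (i + 1 + 1 ≤ lcnt j (u :: l)) := by omega
    by_cases hi : i + 1 ≤ lcnt j (absorbL u l)
    · rw [decide_eq_true hi, decide_eq_true (hiff.mp hi)]
    · rw [decide_eq_false hi, decide_eq_false (fun hh => hi (hiff.mpr hh))]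

lemma sort_prod (hg : ∀ x y, g x * g y ≤ g (x ⊓ y) * g (x ⊔ y)) :
    ∀ (n : ℕ) (l : List (Fin k → Bool)), l.length = n →
      (l.map g).prod ≤ ∏ i ∈ Finset.range n, g (Zl l i) := by
  intro n
  induction n with
  | zero => intro l hl; rw [List.length_eq_zero_iff.mp hl]; simp
  | succ m ih =>
      intro l hl
      rcases l with _ | ⟨u, t⟩
      · simp at hl
      · have hlen : t.length = m := by simpa using hl
        have h1 : (List.map g (u :: t)).prod ≤
            g (joinL u t) * ((absorbL u t).map g).prod := by
          simpa using absorb_prod hg t u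
        have h2 : ((absorbL u t).map g).prod ≤ ∏ i ∈ Finset.range m, g (Zl (absorbL u t) i) :=
          ih _ (by rw [length_absorbL]; exact hlen)
        calc (List.map g (u :: t)).prod ≤ g (joinL u t) * ((absorbL u t).map g).prod := h1
          _ ≤ g (joinL u t) * ∏ i ∈ Finset.range m, g (Zl (absorbL u t) i) :=
              mul_le_mul_right h2 _
          _ = (∏ i ∈ Finset.range m, g (Zl (u :: t) (i + 1))) * g (Zl (u :: t) 0) := by
              rw [joinL_eq_Zl]
              rw [mul_comm]
              congr 1
              refine Finset.prod_congr rfl (fun i _ => ?_)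
              rw [Zl_absorbL]
          _ = ∏ i ∈ Finset.range (m + 1), g (Zl (u :: t) i) := (Finset.prod_range_succ' (fun i => g (Zl (u :: t) i)) m).symm

lemma prod_ite_card {γ : Type*} (s : Finset γ) (p : γ → Prop) [DecidablePred p] (a b : ℝ≥0) :
    ∏ x ∈ s, (if p x then a else b)
      = a ^ (s.filter p).card * b ^ (s.card - (s.filter p).card) := by
  rw [Finset.prod_ite, Finset.prod_const, Finset.prod_const]
  congr 2
  have h := Finset.card_filter_add_card_filter_not (s := s) p
  omega

lemma mem_iff_lt_card_of_antitone {k : ℕ} (d : Fin k → ℕ) (hd : Antitone d) (m : ℕ) (i : Fin k) :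
    ((i : ℕ) < (Finset.univ.filter fun i' => m + 1 ≤ d i').card) ↔ m + 1 ≤ d i := by
  constructor
  · intro h
    by_contra hdi
    have hsub : (Finset.univ.filter fun i' => m + 1 ≤ d i') ⊆ Finset.Iio i := by
      intro i' hi'
      simp only [Finset.mem_filter, Finset.mem_univ, true_and] at hi'
      rw [Finset.mem_Iio]
      by_contra hge
      exact hdi (le_trans hi' (hd (not_lt.mp hge)))
    have hle := Finset.card_le_card hsub
    rw [Fin.card_Iio] at hle
    exact absurd h (not_lt.mpr hle)
  · intro h
    have hsub : Finset.Iic i ⊆ (Finset.univ.filter fun i' => m + 1 ≤ d i') := by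
      intro i' hi'
      simp only [Finset.mem_filter, Finset.mem_univ, true_and]
      rw [Finset.mem_Iic] at hi'
      exact le_trans h (hd hi')
    have hle := Finset.card_le_card hsub
    rw [Fin.card_Iic] at hle
    exact lt_of_lt_of_le (Nat.lt_succ_self (i : ℕ)) hle

lemma card_filter_comp_perm {k : ℕ} (τ : Equiv.Perm (Fin k)) (p : Fin k → Prop)
    [DecidablePred p] :
    (Finset.univ.filter p).card = (Finset.univ.filter fun i => p (τ i)).card := by
  rw [Finset.card_filter, Finset.card_filter]
  exact (Fintype.sum_equiv τ _ _ (fun i => rfl)).symm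

lemma lcnt_ofFn {k N : ℕ} (x : Fin N → (Fin k → Bool)) (j : Fin k) :
    lcnt j (List.ofFn x) = (Finset.univ.filter fun β => x β j = true).card := by
  induction N with
  | zero => simp [lcnt]
  | succ n ih =>
      have h1 : lcnt j (List.ofFn x)
          = lcnt j (List.ofFn (fun β : Fin n => x β.succ)) + (if x 0 j = true then 1 else 0) := by
        unfold lcnt
        rw [List.ofFn_succ, List.countP_cons]
      rw [h1, ih (fun β => x β.succ), Finset.card_filter, Finset.card_filter,
        Fin.sum_univ_succ]
      ring

lemma cnt_le {k N : ℕ} (x : Fin N → (Fin k → Bool)) (j : Fin k) :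
    lcnt j (List.ofFn x) ≤ N := by
  have h := List.countP_le_length (l := List.ofFn x) (p := fun v => v j)
  rwa [List.length_ofFn] at h

lemma le_of_pow_le_mul_pow {S M K : ℝ≥0} (h : ∀ N : ℕ, S ^ N ≤ K * M ^ N) : S ≤ M := by
  by_contra hlt
  push_neg at hlt
  rcases eq_or_lt_of_le (zero_le : 0 ≤ M) with hM0 | hMpos
  · have h1 := h 1
    rw [← hM0] at h1
    simp at h1
    rw [h1, ← hM0] at hlt
    exact lt_irrefl 0 hlt
  · have hM : M ≠ 0 := ne_of_gt hMpos
    have hr : 1 < S / M := by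
      rw [lt_div_iff₀ hMpos, one_mul]
      exact hlt
    obtain ⟨N, hN⟩ := pow_unbounded_of_one_lt (R := ℝ≥0) K hr
    have hle : (S / M) ^ N ≤ K := by
      rw [div_pow, div_le_iff₀ (pow_pos hMpos N)]
      exact h N
    exact absurd hN (not_lt.mpr hle)

/-- the core `n = 1` lemma: power trick -/
lemma core {k : ℕ} (A B : Fin k → ℝ≥0) (g : (Fin k → Bool) → ℝ≥0)
    (hg : ∀ x y, g x * g y ≤ g (x ⊓ y) * g (x ⊔ y))
    (hcap : ∀ v, g v ≤ ∏ i : Fin k, (if (i : ℕ) < cnt v then A i else B i)) :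
    ∑ v, g v ≤ ∏ i, (A i + B i) := by
  have key : ∀ N : ℕ, (∑ v, g v) ^ N
      ≤ (Nat.factorial k : ℝ≥0) * (∏ i, (A i + B i)) ^ N := by
    intro N
    -- expand the power as a sum over tuples
    have hexp : (∑ v, g v) ^ N = ∑ x : Fin N → (Fin k → Bool), ∏ β, g (x β) := by
      rw [← Fin.prod_const N (∑ v, g v), Finset.prod_univ_sum]
      rw [Fintype.piFinset_univ]
    rw [hexp]
    -- bound each term
    have hterm : ∀ x : Fin N → (Fin k → Bool), (∏ β, g (x β))
        ≤ ∑ σ : Equiv.Perm (Fin k),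
            ∏ i, (A (σ i)) ^ (lcnt i (List.ofFn x)) * (B (σ i)) ^ (N - lcnt i (List.ofFn x)) := by
      intro x
      set l := List.ofFn x with hl
      set c : Fin k → ℕ := fun j => lcnt j l with hc
      -- sorting permutation
      set τ : Equiv.Perm (Fin k) := Tuple.sort (fun i => N - c i) with hτ
      have hmono := Tuple.monotone_sort (fun i => N - c i)
      have hcN : ∀ j, c j ≤ N := fun j => cnt_le x j
      have hanti : Antitone (fun i => c (τ i)) := by
        intro a b hab
        have h1 : N - c (τ a) ≤ N - c (τ b) := hmono hab
        calc c (τ b) = N - (N - c (τ b)) := (Nat.sub_sub_self (hcN _)).symm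
          _ ≤ N - (N - c (τ a)) := Nat.sub_le_sub_left h1 N
          _ = c (τ a) := Nat.sub_sub_self (hcN _)
      -- step 1 : sort the tuple
      have h1 : (∏ β, g (x β)) ≤ ∏ α ∈ Finset.range N, g (Zl l α) := by
        have := sort_prod hg N l (by rw [hl, List.length_ofFn])
        calc (∏ β, g (x β)) = (l.map g).prod := by
              rw [hl, List.map_ofFn, List.prod_ofFn]; rfl
          _ ≤ ∏ α ∈ Finset.range N, g (Zl l α) := this
      -- step 2 : caps
      have h2 : ∏ α ∈ Finset.range N, g (Zl l α)
          ≤ ∏ α ∈ Finset.range N, ∏ i : Fin k,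
              (if (i : ℕ) < cnt (Zl l α) then A i else B i) :=
        Finset.prod_le_prod' (fun α _ => hcap _)
      -- identify cnt (Zl l α)
      have hcnt : ∀ α, cnt (Zl l α) = (Finset.univ.filter fun j => α + 1 ≤ c j).card := by
        intro α
        unfold cnt Zl
        congr 1
        ext j
        simp [hc]
      -- step 3 : rewrite via the sorted count
      have h3 : ∀ α (i : Fin k),
          ((i : ℕ) < cnt (Zl l α)) ↔ (α + 1 ≤ c (τ i)) := by
        intro α i
        rw [hcnt α, card_filter_comp_perm τ]
        exact mem_iff_lt_card_of_antitone (fun i => c (τ i)) hanti α i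
      have h4 : ∏ α ∈ Finset.range N, ∏ i : Fin k,
            (if (i : ℕ) < cnt (Zl l α) then A i else B i)
          = ∏ i : Fin k, (A i) ^ (c (τ i)) * (B i) ^ (N - c (τ i)) := by
        rw [Finset.prod_comm]
        refine Finset.prod_congr rfl (fun i _ => ?_)
        have : ∀ α ∈ Finset.range N, (if (i : ℕ) < cnt (Zl l α) then A i else B i)
            = (if α + 1 ≤ c (τ i) then A i else B i) := by
          intro α _
          exact if_congr (h3 α i) rfl rfl
        rw [Finset.prod_congr rfl this, prod_ite_card]
        have hfilter : (Finset.range N).filter (fun α => α + 1 ≤ c (τ i)) =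
            Finset.range (c (τ i)) := by
          ext a
          simp only [Finset.mem_filter, Finset.mem_range]
          have := hcN (τ i)
          omega
        rw [hfilter, Finset.card_range, Finset.card_range]
      -- step 4 : reindex by τ and bound by the sum over all permutations
      have h5 : ∏ i : Fin k, (A i) ^ (c (τ i)) * (B i) ^ (N - c (τ i))
          = ∏ i : Fin k, (A (τ.symm i)) ^ (c i) * (B (τ.symm i)) ^ (N - c i) := by
        refine Fintype.prod_equiv τ _ _ (fun i => ?_)
        rw [Equiv.symm_apply_apply]
      have h6 : ∏ i : Fin k, (A (τ.symm i)) ^ (c i) * (B (τ.symm i)) ^ (N - c i)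
          ≤ ∑ σ : Equiv.Perm (Fin k), ∏ i, (A (σ i)) ^ (c i) * (B (σ i)) ^ (N - c i) :=
        Finset.single_le_sum
          (f := fun σ : Equiv.Perm (Fin k) => ∏ i, (A (σ i)) ^ (c i) * (B (σ i)) ^ (N - c i))
          (fun σ _ => zero_le) (Finset.mem_univ τ.symm)
      calc (∏ β, g (x β)) ≤ ∏ α ∈ Finset.range N, g (Zl l α) := h1
        _ ≤ _ := h2
        _ = _ := h4
        _ = _ := h5
        _ ≤ _ := h6
    calc (∑ x : Fin N → (Fin k → Bool), ∏ β, g (x β))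
        ≤ ∑ x : Fin N → (Fin k → Bool), ∑ σ : Equiv.Perm (Fin k),
            ∏ i, (A (σ i)) ^ (lcnt i (List.ofFn x)) * (B (σ i)) ^ (N - lcnt i (List.ofFn x)) :=
          Finset.sum_le_sum (fun x _ => hterm x)
      _ = ∑ σ : Equiv.Perm (Fin k), ∑ x : Fin N → (Fin k → Bool),
            ∏ i, (A (σ i)) ^ (lcnt i (List.ofFn x)) * (B (σ i)) ^ (N - lcnt i (List.ofFn x)) :=
          Finset.sum_comm
      _ = ∑ σ : Equiv.Perm (Fin k), (∏ i, (A i + B i)) ^ N := by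
          refine Finset.sum_congr rfl (fun σ _ => ?_)
          have hx : ∀ x : Fin N → (Fin k → Bool),
              (∏ i, (A (σ i)) ^ (lcnt i (List.ofFn x)) * (B (σ i)) ^ (N - lcnt i (List.ofFn x)))
              = ∏ β : Fin N, ∏ i : Fin k, (if x β i = true then A (σ i) else B (σ i)) := by
            intro x
            rw [Finset.prod_comm]
            refine Finset.prod_congr rfl (fun i _ => ?_)
            rw [prod_ite_card, lcnt_ofFn x i]
            congr 2 <;> simp
          rw [Finset.sum_congr rfl (fun x _ => hx x)]
          have : ∑ x : Fin N → (Fin k → Bool),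
              ∏ β : Fin N, ∏ i : Fin k, (if x β i = true then A (σ i) else B (σ i))
              = ∏ β : Fin N, ∑ v : Fin k → Bool, ∏ i, (if v i = true then A (σ i) else B (σ i)) := by
            rw [Finset.prod_univ_sum, Fintype.piFinset_univ]
          rw [this]
          have hb : ∀ i : Fin k, A (σ i) + B (σ i)
              = ∑ b : Bool, (if b = true then A (σ i) else B (σ i)) := by
            intro i
            rw [Fintype.sum_bool]
            simp
          have hv : ∑ v : Fin k → Bool, ∏ i, (if v i = true then A (σ i) else B (σ i))
              = ∏ i : Fin k, (A (σ i) + B (σ i)) := by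
            rw [Finset.prod_congr rfl (fun i _ => hb i), Finset.prod_univ_sum,
              Fintype.piFinset_univ]
          rw [Finset.prod_congr rfl (fun (β : Fin N) _ => hv), Finset.prod_const,
            Finset.card_univ, Fintype.card_fin]
          congr 1
          exact Equiv.prod_comp σ (fun i => A i + B i)
      _ = (Nat.factorial k : ℝ≥0) * (∏ i, (A i + B i)) ^ N := by
          rw [Finset.sum_const, Finset.card_univ, Fintype.card_perm, Fintype.card_fin,
            nsmul_eq_mul]
  exact le_of_pow_le_mul_pow key

/-- glue a first coordinate to each of the `k` vectors -/
def mk {k n : ℕ} (xb : Fin k → Fin n → Bool) (ε : Fin k → Bool) : Fin k → Fin (n+1) → Bool :=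
  fun a => Fin.cons (ε a) (xb a)

lemma mk_inf {k n : ℕ} (x y : Fin k → Fin n → Bool) (ε δ : Fin k → Bool) :
    mk x ε ⊓ mk y δ = mk (x ⊓ y) (ε ⊓ δ) := by
  funext a j
  refine Fin.cases ?_ (fun j' => ?_) j <;> simp [mk]

lemma mk_sup {k n : ℕ} (x y : Fin k → Fin n → Bool) (ε δ : Fin k → Bool) :
    mk x ε ⊔ mk y δ = mk (x ⊔ y) (ε ⊔ δ) := by
  funext a j
  refine Fin.cases ?_ (fun j' => ?_) j <;> simp [mk]

lemma zvec_mk {k n : ℕ} (xb : Fin k → Fin n → Bool) (ε : Fin k → Bool) (i : Fin k) :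
    zvec (mk xb ε) i = (Fin.cons (decide ((i : ℕ) + 1 ≤ cnt ε)) (zvec xb i) : Fin (n+1) → Bool) := by
  funext j
  refine Fin.cases ?_ (fun j' => ?_) j <;> simp [zvec, mk, cnt]

lemma sum_mk {k n : ℕ} (g : (Fin k → Fin (n+1) → Bool) → ℝ≥0) :
    ∑ x : Fin k → Fin (n+1) → Bool, g x
      = ∑ xb : Fin k → Fin n → Bool, ∑ ε : Fin k → Bool, g (mk xb ε) := by
  rw [← Fintype.sum_prod_type']
  refine (Fintype.sum_bijective
    (fun p : (Fin k → Fin n → Bool) × (Fin k → Bool) => mk p.1 p.2) ?_ _ _ (fun p => rfl)).symm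
  constructor
  · intro p q hpq
    have h1 : p.2 = q.2 := by
      funext a
      have := congrFun (congrFun hpq a) 0
      simpa [mk] using this
    have h2 : p.1 = q.1 := by
      funext a j
      have := congrFun (congrFun hpq a) j.succ
      simpa [mk] using this
    exact Prod.ext h2 h1
  · intro x
    refine ⟨(fun a j => x a j.succ, fun a => x a 0), ?_⟩
    funext a
    exact Fin.cons_self_tail (x a)

lemma sum_cons {n : ℕ} (f : (Fin (n+1) → Bool) → ℝ≥0) :
    ∑ y : Fin (n+1) → Bool, f y
      = ∑ yb : Fin n → Bool, (f (Fin.cons true yb) + f (Fin.cons false yb)) := by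
  have hbij : Function.Bijective (fun p : Bool × (Fin n → Bool) => (Fin.cons p.1 p.2 : Fin (n+1) → Bool)) := by
    constructor
    · intro p q hpq
      have h1 : p.1 = q.1 := by
        have := congrFun hpq 0
        simpa using this
      have h2 : p.2 = q.2 := by
        funext j
        have := congrFun hpq j.succ
        simpa using this
      exact Prod.ext h1 h2
    · intro y
      exact ⟨(y 0, fun j => y j.succ), Fin.cons_self_tail y⟩
  rw [← Fintype.sum_bijective _ hbij _ _ (fun p => rfl)]
  rw [Fintype.sum_prod_type, Fintype.sum_bool, ← Finset.sum_add_distrib]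

end LogSupAux

open LogSupAux

/-- Theorem 8 of the paper (the variant of the "2k functions" theorem): if
`g : {0,1}^{kn} → ℝ≥0` is log-supermodular (identifying `{0,1}^{kn}` with `k`-tuples of
vectors in `{0,1}ⁿ`, with the componentwise lattice structure) and
`g(x¹,…,xᵏ) ≤ ∏ᵢ fᵢ(zⁱ(x¹,…,xᵏ))` for all `x¹,…,xᵏ ∈ {0,1}ⁿ`, then
`∑_{x¹,…,xᵏ} g(x¹,…,xᵏ) ≤ ∏ᵢ ∑_{x ∈ {0,1}ⁿ} fᵢ(x)`. -/
theorem sum_le_prod_of_logSupermodular {n k : ℕ}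
    (f : Fin k → (Fin n → Bool) → ℝ≥0) (g : (Fin k → Fin n → Bool) → ℝ≥0)
    (hg : ∀ x y : Fin k → Fin n → Bool, g x * g y ≤ g (x ⊓ y) * g (x ⊔ y))
    (hgf : ∀ x : Fin k → Fin n → Bool, g x ≤ ∏ i : Fin k, f i (zvec x i)) :
    ∑ x : Fin k → Fin n → Bool, g x ≤ ∏ i : Fin k, ∑ y : Fin n → Bool, f i y := by
  induction n with
  | zero =>
      have x0 : Fin k → Fin 0 → Bool := fun _ j => j.elim0
      rw [Fintype.sum_subsingleton g x0]
      calc g x0 ≤ ∏ i, f i (zvec x0 i) := hgf x0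
        _ = ∏ i, ∑ y : Fin 0 → Bool, f i y := by
            refine Finset.prod_congr rfl (fun i _ => ?_)
            exact (Fintype.sum_subsingleton (f i) (zvec x0 i)).symm
  | succ n ih =>
      set G : (Fin k → Fin n → Bool) → ℝ≥0 := fun xb => ∑ ε : Fin k → Bool, g (mk xb ε) with hG
      set F : Fin k → (Fin n → Bool) → ℝ≥0 :=
        fun i yb => f i (Fin.cons true yb) + f i (Fin.cons false yb) with hF
      have hGlsm : ∀ x y, G x * G y ≤ G (x ⊓ y) * G (x ⊔ y) := by
        intro x y
        refine four_functions_theorem_univ (fun ε => g (mk x ε)) (fun δ => g (mk y δ))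
          (fun ε => g (mk (x ⊓ y) ε)) (fun ε => g (mk (x ⊔ y) ε))
          (fun _ => zero_le) (fun _ => zero_le) (fun _ => zero_le) (fun _ => zero_le)
          (fun ε δ => ?_)
        have h := hg (mk x ε) (mk y δ)
        rwa [mk_inf, mk_sup] at h
      have hGcap : ∀ xb, G xb ≤ ∏ i, F i (zvec xb i) := by
        intro xb
        refine core (fun i => f i (Fin.cons true (zvec xb i)))
          (fun i => f i (Fin.cons false (zvec xb i)))
          (fun ε => g (mk xb ε)) (fun ε δ => ?_) (fun ε => ?_)
        · have h := hg (mk xb ε) (mk xb δ)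
          rwa [mk_inf, mk_sup, inf_idem, sup_idem] at h
        · calc g (mk xb ε) ≤ ∏ i, f i (zvec (mk xb ε) i) := hgf _
            _ = ∏ i : Fin k, (if (i : ℕ) < cnt ε
                  then f i (Fin.cons true (zvec xb i))
                  else f i (Fin.cons false (zvec xb i))) := by
                refine Finset.prod_congr rfl (fun i _ => ?_)
                rw [zvec_mk]
                rcases Nat.lt_or_ge (i : ℕ) (cnt ε) with h | h
                · rw [if_pos h, decide_eq_true (show (i : ℕ) + 1 ≤ cnt ε from h)]
                · rw [if_neg (not_lt.mpr h), decide_eq_false (show ¬ ((i : ℕ) + 1 ≤ cnt ε) from not_lt.mpr h)]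
      have hmain := ih F G hGlsm hGcap
      rw [sum_mk g]
      calc (∑ xb : Fin k → Fin n → Bool, ∑ ε : Fin k → Bool, g (mk xb ε))
          = ∑ xb, G xb := rfl
        _ ≤ ∏ i, ∑ yb, F i yb := hmain
        _ = ∏ i, ∑ y : Fin (n+1) → Bool, f i y := by
            refine Finset.prod_congr rfl (fun i _ => ?_)
            rw [sum_cons (f i)]
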